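/- Fix an integer d ≥ 2 and constants c > 0, C ≥ 1. There exist K ≥ 1 and ε_0 > 0 such that for every ε ∈ (0,ε_0) there exists δ_0 > 0 with the following property for all δ ∈ (0,δ_0). In the pinned setup, for every δ-tube T one has vol(T ∩ F) ≤ δ^{d − 1/2 − Kε}. -/

import Mathlib

open MeasureTheory Metric Set
open scoped ENNReal

noncomputable section

abbrev Euc (d : ℕ) : Type := EuclideanSpace ℝ (Fin d)

/-- `A ⊆ ℝ` is a `(δ,ρ)_1` set with constant `C`. -/
def IsDeltaRhoSet1 (δ ρ C : ℝ) (A : Set ℝ) : Prop :=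
  ∀ (x r : ℝ), δ ≤ r →
    volume (A ∩ closedBall x r) ≤ ENNReal.ofReal (C * δ ^ (1 - ρ) * r ^ ρ)

/-- The line through `a` with direction `v`. -/
def lineThrough {d : ℕ} (a v : Euc d) : Set (Euc d) :=
  Set.range fun t : ℝ => a + t • v

/-- The `ρ`-tube around the line through `a` with direction `v`: the closed
`ρ`-neighbourhood of the line. -/
def Tube {d : ℕ} (ρ : ℝ) (a v : Euc d) : Set (Euc d) :=
  {x | infDist x (lineThrough a v) ≤ ρ}

open scoped RealInnerProductSpace

/- ### Auxiliary lemmas -/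

lemma sqrt_diff_lip {Cb c₁ s : ℝ} (hc₁ : 0 < c₁)
    {u v : ℝ} (hu : u ∈ Set.Icc (Real.sqrt (c₁^2 + s^2)) Cb)
    (hv : v ∈ Set.Icc (Real.sqrt (c₁^2 + s^2)) Cb) :
    |Real.sqrt (u^2 - s^2) - Real.sqrt (v^2 - s^2)| ≤ (Cb / c₁) * |u - v| := by
  obtain ⟨hu1, hu2⟩ := hu
  obtain ⟨hv1, hv2⟩ := hv
  have hr0 : (0:ℝ) ≤ Real.sqrt (c₁^2 + s^2) := Real.sqrt_nonneg _
  have hu0 : 0 ≤ u := le_trans hr0 hu1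
  have hv0 : 0 ≤ v := le_trans hr0 hv1
  have hsq : Real.sqrt (c₁^2 + s^2) ^ 2 = c₁^2 + s^2 :=
    Real.sq_sqrt (by positivity)
  have hu2' : c₁^2 + s^2 ≤ u^2 := by
    rw [← hsq]; exact pow_le_pow_left₀ hr0 hu1 2
  have hv2' : c₁^2 + s^2 ≤ v^2 := by
    rw [← hsq]; exact pow_le_pow_left₀ hr0 hv1 2
  set a := Real.sqrt (u^2 - s^2) with ha
  set b := Real.sqrt (v^2 - s^2) with hb
  have ha0 : 0 ≤ a := Real.sqrt_nonneg _
  have hb0 : 0 ≤ b := Real.sqrt_nonneg _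
  have ha2 : a^2 = u^2 - s^2 := Real.sq_sqrt (by nlinarith)
  have hb2 : b^2 = v^2 - s^2 := Real.sq_sqrt (by nlinarith)
  have hac : c₁ ≤ a := by
    rw [ha, show c₁ = Real.sqrt (c₁^2) by rw [Real.sqrt_sq hc₁.le]]
    exact Real.sqrt_le_sqrt (by nlinarith)
  have hbc : c₁ ≤ b := by
    rw [hb, show c₁ = Real.sqrt (c₁^2) by rw [Real.sqrt_sq hc₁.le]]
    exact Real.sqrt_le_sqrt (by nlinarith)
  have hau : a ≤ u := by nlinarith [ha2, ha0, hu0, sq_nonneg s]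
  have hCb : 0 < Cb := hc₁.trans_le (hac.trans (hau.trans hu2))
  have key : |a - b| * (a + b) = |u - v| * (u + v) := by
    have h1 : |a - b| * (a + b) = |(a - b) * (a + b)| := by
      rw [abs_mul, abs_of_nonneg (show (0:ℝ) ≤ a + b by linarith)]
    have h2 : |u - v| * (u + v) = |(u - v) * (u + v)| := by
      rw [abs_mul, abs_of_nonneg (show (0:ℝ) ≤ u + v by linarith)]
    rw [h1, h2]; congr 1; nlinarith [ha2, hb2]
  rw [div_mul_eq_mul_div, le_div_iff₀ hc₁]
  have step1 : |a - b| * c₁ ≤ |a - b| * ((a + b) / 2) := by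
    apply mul_le_mul_of_nonneg_left _ (abs_nonneg _); linarith
  have huv : u + v ≤ 2 * Cb := by linarith
  have h2 : |u - v| * (u + v) ≤ |u - v| * (2 * Cb) :=
    mul_le_mul_of_nonneg_left huv (abs_nonneg _)
  calc |a - b| * c₁ ≤ |a - b| * ((a + b) / 2) := step1
    _ = (|a - b| * (a + b)) / 2 := by ring
    _ = (|u - v| * (u + v)) / 2 := by rw [key]
    _ ≤ Cb * |u - v| := by linarith

lemma oneD {D : Set ℝ} {Cb : ℝ} (hCb : 0 < Cb) (hD : D ⊆ Set.Icc 0 Cb)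
    {c₁ : ℝ} (hc₁ : 0 < c₁) (p s : ℝ) :
    volume {t : ℝ | Real.sqrt ((t - p)^2 + s^2) ∈ D ∧ c₁ ≤ |t - p|}
      ≤ ENNReal.ofReal (2 * (Cb / c₁)) * volume (D ∩ Set.Icc 0 Cb) := by
  set r0 := Real.sqrt (c₁^2 + s^2) with hr0
  set S := D ∩ Set.Icc r0 Cb with hS
  set gp : ℝ → ℝ := fun u => p + Real.sqrt (u^2 - s^2) with hgp
  set gm : ℝ → ℝ := fun u => p - Real.sqrt (u^2 - s^2) with hgm
  have hCbc : 0 ≤ Cb / c₁ := by positivity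
  have hlipp : LipschitzOnWith (Real.toNNReal (Cb / c₁)) gp (Set.Icc r0 Cb) := by
    rw [lipschitzOnWith_iff_dist_le_mul]
    intro u hu v hv
    simp only [Real.dist_eq, hgp]
    calc |p + Real.sqrt (u^2 - s^2) - (p + Real.sqrt (v^2 - s^2))|
        = |Real.sqrt (u^2 - s^2) - Real.sqrt (v^2 - s^2)| := by ring_nf
      _ ≤ (Cb / c₁) * |u - v| := sqrt_diff_lip hc₁ hu hv
      _ = Real.toNNReal (Cb / c₁) * |u - v| := by
          rw [Real.coe_toNNReal _ hCbc]
  have hlipm : LipschitzOnWith (Real.toNNReal (Cb / c₁)) gm (Set.Icc r0 Cb) := by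
    rw [lipschitzOnWith_iff_dist_le_mul]
    intro u hu v hv
    simp only [Real.dist_eq, hgm]
    calc |p - Real.sqrt (u^2 - s^2) - (p - Real.sqrt (v^2 - s^2))|
        = |Real.sqrt (v^2 - s^2) - Real.sqrt (u^2 - s^2)| := by ring_nf
      _ ≤ (Cb / c₁) * |v - u| := sqrt_diff_lip hc₁ hv hu
      _ = Real.toNNReal (Cb / c₁) * |u - v| := by
          rw [Real.coe_toNNReal _ hCbc, abs_sub_comm]
  have hincl : {t : ℝ | Real.sqrt ((t - p)^2 + s^2) ∈ D ∧ c₁ ≤ |t - p|}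
      ⊆ gp '' S ∪ gm '' S := by
    rintro t ⟨htD, htc⟩
    set u := Real.sqrt ((t - p)^2 + s^2) with hu
    have huD : u ∈ D := htD
    have huC : u ≤ Cb := (hD huD).2
    have hur0 : r0 ≤ u := by
      apply Real.sqrt_le_sqrt
      have : c₁^2 ≤ (t - p)^2 := by
        have h2 := pow_le_pow_left₀ hc₁.le htc 2
        rwa [sq_abs] at h2
      linarith
    have huS : u ∈ S := ⟨huD, hur0, huC⟩
    have hu2 : u^2 = (t-p)^2 + s^2 := Real.sq_sqrt (by positivity)
    have hsqrt : Real.sqrt (u^2 - s^2) = |t - p| := by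
      rw [hu2]; simp [Real.sqrt_sq_eq_abs]
    rcases le_or_gt 0 (t - p) with h | h
    · left
      exact ⟨u, huS, by simp [hgp, hsqrt, abs_of_nonneg h]⟩
    · right
      exact ⟨u, huS, by simp [hgm, hsqrt, abs_of_neg h]⟩
  calc volume {t : ℝ | Real.sqrt ((t - p)^2 + s^2) ∈ D ∧ c₁ ≤ |t - p|}
      ≤ volume (gp '' S ∪ gm '' S) := measure_mono hincl
    _ ≤ volume (gp '' S) + volume (gm '' S) := measure_union_le _ _
    _ ≤ (Real.toNNReal (Cb/c₁) : ℝ≥0∞) * volume S + (Real.toNNReal (Cb/c₁) : ℝ≥0∞) * volume S := by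
        gcongr
        · calc volume (gp '' S) = μH[1] (gp '' S) := by rw [MeasureTheory.hausdorffMeasure_real]
            _ ≤ (Real.toNNReal (Cb/c₁) : ℝ≥0∞) ^ (1:ℝ) * μH[1] S := by
                apply (hlipp.mono Set.inter_subset_right).hausdorffMeasure_image_le zero_le_one
            _ = (Real.toNNReal (Cb/c₁) : ℝ≥0∞) * volume S := by
                rw [ENNReal.rpow_one, MeasureTheory.hausdorffMeasure_real]
        · calc volume (gm '' S) = μH[1] (gm '' S) := by rw [MeasureTheory.hausdorffMeasure_real]
            _ ≤ (Real.toNNReal (Cb/c₁) : ℝ≥0∞) ^ (1:ℝ) * μH[1] S := by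
                apply (hlipm.mono Set.inter_subset_right).hausdorffMeasure_image_le zero_le_one
            _ = (Real.toNNReal (Cb/c₁) : ℝ≥0∞) * volume S := by
                rw [ENNReal.rpow_one, MeasureTheory.hausdorffMeasure_real]
    _ = ENNReal.ofReal (2 * (Cb / c₁)) * volume S := by
        rw [← two_mul, ← mul_assoc]
        congr 1
        rw [ENNReal.ofReal_mul (by norm_num : (0:ℝ) ≤ 2)]
        norm_num [ENNReal.ofReal]
    _ ≤ ENNReal.ofReal (2 * (Cb / c₁)) * volume (D ∩ Set.Icc 0 Cb) := by
        gcongr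
        exact Set.inter_subset_inter_right _ (Set.Icc_subset_Icc_left (Real.sqrt_nonneg _))

lemma exists_onb {m : ℕ} (e : Euc (m+1)) (he : ‖e‖ = 1) :
    ∃ B : OrthonormalBasis (Fin (m+1)) ℝ (Euc (m+1)), B 0 = e := by
  have hcard : Module.finrank ℝ (Euc (m+1)) = Fintype.card (Fin (m+1)) := by
    simp [finrank_euclideanSpace_fin]
  have horth : Orthonormal ℝ (({(0 : Fin (m+1))} : Set (Fin (m+1))).restrict (fun _ => e)) := by
    constructor
    · intro i; exact he
    · intro i j hij
      exact absurd (Subtype.ext (by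
        have hi := i.2; have hj := j.2
        simp only [Set.mem_singleton_iff] at hi hj
        rw [hi, hj])) hij
  obtain ⟨B, hB⟩ := horth.exists_orthonormalBasis_extension_of_card_eq hcard
  exact ⟨B, hB 0 rfl⟩

lemma det_transversal {m : ℕ} {C : ℝ} (hC : 1 ≤ C) (w : Fin (m+1) → Euc (m+1))
    (hw : ∀ j, ‖w j‖ ≤ C) {e : Euc (m+1)} (he : ‖e‖ = 1) {c : ℝ} (hc : 0 < c)
    (hdet : c ≤ |Matrix.det (Matrix.of fun i j => w j i)|) :
    ∃ j, c / ((m+1) * Nat.factorial (m+1) * C^(m+1)) ≤ |⟪e, w j⟫| := by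
  obtain ⟨B, hB0⟩ := exists_onb e he
  set P : Matrix (Fin (m+1)) (Fin (m+1)) ℝ := Matrix.of fun i k => B i k with hP
  set W : Matrix (Fin (m+1)) (Fin (m+1)) ℝ := Matrix.of fun i j => w j i with hW
  have hinner : ∀ i j, (P * W) i j = ⟪B i, w j⟫ := by
    intro i j
    rw [Matrix.mul_apply, PiLp.inner_apply]
    simp [hP, hW, RCLike.inner_apply, mul_comm]
  have hPP : P * P.transpose = 1 := by
    ext i i'
    rw [Matrix.mul_apply]
    have : ∑ k, P i k * P.transpose k i' = ⟪B i, B i'⟫ := by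
      rw [PiLp.inner_apply]
      simp [hP, Matrix.transpose_apply, RCLike.inner_apply, mul_comm]
    rw [this, orthonormal_iff_ite.mp B.orthonormal i i', Matrix.one_apply]
  have hdetP : |P.det| = 1 := by
    have h1 : P.det * P.det = 1 := by
      have := congrArg Matrix.det hPP
      rwa [Matrix.det_mul, Matrix.det_transpose, Matrix.det_one] at this
    rcases mul_self_eq_one_iff.mp h1 with h | h <;> simp [h]
  have hdetM : c ≤ |(P * W).det| := by
    rw [Matrix.det_mul, abs_mul, hdetP, one_mul]; exact hdet
  have hMentry : ∀ i j, |(P * W) i j| ≤ C := by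
    intro i j
    rw [hinner]
    calc |⟪B i, w j⟫| ≤ ‖B i‖ * ‖w j‖ := abs_real_inner_le_norm _ _
      _ ≤ 1 * C := by
          apply mul_le_mul _ (hw j) (norm_nonneg _) zero_le_one
          rw [B.orthonormal.1 i]
      _ = C := one_mul C
  set M := P * W with hM
  have hsub : ∀ j : Fin (m+1), |(M.submatrix Fin.succ j.succAbove).det| ≤ (Nat.factorial m) * C^m := by
    intro j
    have := Matrix.det_le (A := M.submatrix Fin.succ j.succAbove)
      (abv := AbsoluteValue.abs) (x := C)
      (fun i' j' => by
        simpa [Matrix.submatrix_apply, AbsoluteValue.abs_apply]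
          using hMentry (i'.succ) (j.succAbove j'))
    simpa [Fintype.card_fin, nsmul_eq_mul, AbsoluteValue.abs_apply] using this
  have hexp : |M.det| ≤ ∑ j : Fin (m+1), |M 0 j| * ((Nat.factorial m) * C^m) := by
    rw [Matrix.det_succ_row_zero]
    refine le_trans (Finset.abs_sum_le_sum_abs _ _) (Finset.sum_le_sum fun j _ => ?_)
    rw [abs_mul, abs_mul, abs_pow, abs_neg, abs_one, one_pow, one_mul]
    exact mul_le_mul_of_nonneg_left (hsub j) (abs_nonneg _)
  by_contra hcon
  push_neg at hcon
  set c₁ := c / ((m+1) * Nat.factorial (m+1) * C^(m+1)) with hc₁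
  have hCpos : (0:ℝ) < C := lt_of_lt_of_le one_pos hC
  have hKpos : (0:ℝ) < (Nat.factorial m) * C^m := by positivity
  have hsum : ∑ j : Fin (m+1), |M 0 j| * ((Nat.factorial m) * C^m)
      < ∑ _j : Fin (m+1), c₁ * ((Nat.factorial m) * C^m) := by
    apply Finset.sum_lt_sum_of_nonempty Finset.univ_nonempty
    intro j _
    apply mul_lt_mul_of_pos_right _ hKpos
    rw [hinner 0 j, hB0]
    exact hcon j
  rw [Finset.sum_const, Finset.card_univ, Fintype.card_fin, nsmul_eq_mul] at hsum
  push_cast at hsum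
  set a : ℝ := (m:ℝ) + 1 with haa
  set f : ℝ := (Nat.factorial m : ℝ) with hff
  have hfpos : 0 < f := by positivity
  have hapos : (1:ℝ) ≤ a := by
    rw [haa]; linarith [Nat.cast_nonneg (α := ℝ) m]
  have hfF : ((Nat.factorial (m+1) : ℝ)) = a * f := by
    rw [Nat.factorial_succ]; push_cast; ring
  have hden : (0:ℝ) < a * (Nat.factorial (m+1)) * C^(m+1) := by
    rw [hfF]; positivity
  have hfinal : a * (c₁ * (f * C^m)) ≤ c := by
    rw [hc₁, div_mul_eq_mul_div, mul_div_assoc']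
    rw [div_le_iff₀ hden]
    have e1 : a * (Nat.factorial (m+1)) * C^(m+1) = (a*C) * (a * f * C^m) := by
      rw [hfF, pow_succ]; ring
    rw [e1]
    have hY : (0:ℝ) < a * f * C^m := by positivity
    have haC : (1:ℝ) ≤ a * C := by nlinarith
    nlinarith [mul_pos hc hY]
  have hfin2 := lt_of_le_of_lt (hdetM.trans hexp) hsum
  have : (m:ℝ) + 1 = a := rfl
  linarith

lemma dist_repr {m : ℕ} (B : OrthonormalBasis (Fin (m+1)) ℝ (Euc (m+1))) (y w : Euc (m+1)) :
    dist y w = Real.sqrt ((B.repr y 0 - B.repr w 0)^2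
      + ∑ i : Fin m, (B.repr y i.succ - B.repr w i.succ)^2) := by
  rw [dist_eq_norm, ← B.repr.norm_map (y - w), EuclideanSpace.norm_eq]
  congr 1
  rw [Fin.sum_univ_succ]
  simp [map_sub, Real.norm_eq_abs, sq_abs]

lemma lineThrough_smul {d : ℕ} (a v : Euc d) (hv : v ≠ 0) :
    lineThrough a v = lineThrough a (‖v‖⁻¹ • v) := by
  unfold lineThrough
  ext y
  constructor
  · rintro ⟨t, rfl⟩
    refine ⟨t * ‖v‖, ?_⟩
    simp only [smul_smul]
    rw [mul_assoc, mul_inv_cancel₀ (norm_ne_zero_iff.mpr hv), mul_one]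
  · rintro ⟨t, rfl⟩
    refine ⟨t * ‖v‖⁻¹, ?_⟩
    simp only [smul_smul]

lemma tube_tail {m : ℕ} (B : OrthonormalBasis (Fin (m+1)) ℝ (Euc (m+1))) {e : Euc (m+1)}
    (hB0 : B 0 = e) (a y : Euc (m+1)) {δ : ℝ} (hy : y ∈ Tube δ a e) :
    Real.sqrt (∑ i : Fin m, (B.repr y i.succ - B.repr a i.succ)^2) ≤ δ := by
  refine le_trans ?_ hy
  have hne : (lineThrough a e).Nonempty := ⟨a, ⟨0, by simp⟩⟩
  rw [infDist_eq_iInf]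
  have : Nonempty (lineThrough a e) := hne.to_subtype
  apply le_ciInf
  rintro ⟨w, t, rfl⟩
  rw [dist_repr B]
  apply Real.sqrt_le_sqrt
  have hcoord : ∀ i : Fin m, B.repr (a + t • e) i.succ = B.repr a i.succ := by
    intro i
    have hrepr : B.repr e = EuclideanSpace.single 0 1 := by rw [← hB0, B.repr_self]
    rw [map_add, _root_.map_smul]
    simp [hrepr, EuclideanSpace.single_apply, Fin.succ_ne_zero]
  have hsum : ∑ i : Fin m, (B.repr y i.succ - B.repr a i.succ)^2
      = ∑ i : Fin m, (B.repr y i.succ - B.repr (a + t • e) i.succ)^2 := by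
    apply Finset.sum_congr rfl; intro i _; rw [hcoord i]
  rw [hsum]
  nlinarith [sq_nonneg (B.repr y 0 - B.repr (a + t • e) 0)]

/-- **Tube bound in the pinned setup (Lemma 2.2).** Any `δ`-tube meets `F` in measure at
most `δ^(d - 1/2 - Kε)`. -/
theorem pinned_tube_bound (d : ℕ) (hd : 2 ≤ d) (c C : ℝ) (hc : 0 < c) (hC : 1 ≤ C) :
    ∃ K : ℝ, 1 ≤ K ∧ ∃ ε₀ : ℝ, 0 < ε₀ ∧ ∀ ε : ℝ, 0 < ε → ε < ε₀ →
      ∃ δ₀ : ℝ, 0 < δ₀ ∧ ∀ δ : ℝ, 0 < δ → δ < δ₀ →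
      ∀ (b : Fin (d + 1) → Euc d) (D : Set ℝ) (x : Fin (d + 1) → Euc d) (F : Set (Euc d)),
        (∀ y : Fin (d + 1) → Euc d, (∀ j, y j ∈ closedBall (b j) 1) →
          c ≤ |Matrix.det (Matrix.of fun i j : Fin d => (y j.succ - y 0) i)| ∧
          |Matrix.det (Matrix.of fun i j : Fin d => (y j.succ - y 0) i)| ≤ C) →
        D ⊆ Icc 0 C →
        IsDeltaRhoSet1 δ (1 / 2) C D →
        (∀ j : Fin (d + 1), j ≠ 0 → x j ∈ closedBall (b j) 1) →
        F ⊆ closedBall (b 0) 1 →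
        MeasurableSet F →
        (∀ y ∈ F, ∀ j : Fin (d + 1), j ≠ 0 → dist y (x j) ∈ D) →
        ∀ a v : Euc d, v ≠ 0 →
          volume (Tube δ a v ∩ F) ≤ ENNReal.ofReal (δ ^ ((d : ℝ) - 1 / 2 - K * ε)) := by
  have hC0 : (0:ℝ) < C := lt_of_lt_of_le one_pos hC
  refine ⟨1, le_refl 1, 1, one_pos, ?_⟩
  intro ε hε hε1
  obtain ⟨m, rfl⟩ : ∃ m, d = m + 1 := ⟨d - 1, by omega⟩
  set c₁ : ℝ := c / ((m+1) * Nat.factorial (m+1) * C^(m+1)) with hc₁def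
  have hc₁ : 0 < c₁ := by positivity
  set κ : ℝ := (volume (ball (0 : Euc m) 1)).toReal with hκdef
  have hκ0 : 0 ≤ κ := ENNReal.toReal_nonneg
  set A₀ : ℝ := ((m:ℝ)+1) * (2 * (C/c₁)) * (C * C^((1:ℝ)/2)) * κ with hA₀def
  have hA₀0 : 0 ≤ A₀ := by positivity
  set A₁ : ℝ := max A₀ 1 with hA₁def
  have hA₁1 : (1:ℝ) ≤ A₁ := le_max_right _ _
  have hA₁0 : (0:ℝ) < A₁ := lt_of_lt_of_le one_pos hA₁1
  refine ⟨min (min 1 (C/2)) (A₁ ^ (-1/ε : ℝ)), ?_, ?_⟩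
  · exact lt_min (lt_min one_pos (by positivity)) (Real.rpow_pos_of_pos hA₁0 _)
  intro δ hδ0 hδlt b D x F hdetH hD hDRho hx hFb hFm hFD a v hv
  have hδ1 : δ < 1 := lt_of_lt_of_le hδlt (le_trans (min_le_left _ _) (min_le_left _ _))
  have hδC2 : δ ≤ C/2 :=
    le_of_lt (lt_of_lt_of_le hδlt (le_trans (min_le_left _ _) (min_le_right _ _)))
  have hδA : δ ≤ A₁ ^ (-1/ε : ℝ) := le_of_lt (lt_of_lt_of_le hδlt (min_le_right _ _))
  set e : Euc (m+1) := ‖v‖⁻¹ • v with he_def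
  have he : ‖e‖ = 1 := by
    rw [he_def, norm_smul, norm_inv, norm_norm, inv_mul_cancel₀ (norm_ne_zero_iff.mpr hv)]
  have hTube : Tube δ a v = Tube δ a e := by
    unfold Tube; rw [lineThrough_smul a v hv]
  obtain ⟨B, hB0⟩ := exists_onb e he
  set T : Set (Euc (m+1)) := Tube δ a e with hTdef
  have hTm : MeasurableSet T := by
    have : IsClosed T := isClosed_le (continuous_infDist_pt _) continuous_const
    exact this.measurableSet
  set G : Fin (m+1) → Set (Euc (m+1)) := fun j => {y | c₁ ≤ |⟪e, x j.succ - y⟫|} with hGdef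
  have hGm : ∀ j, MeasurableSet (G j) := by
    intro j
    have : IsClosed (G j) := by
      apply isClosed_le continuous_const
      exact (continuous_const.inner (continuous_const.sub continuous_id)).abs
    exact this.measurableSet
  have hcover : T ∩ F ⊆ ⋃ j, (T ∩ F ∩ G j) := by
    rintro y ⟨hyT, hyF⟩
    have hwnorm : ∀ j : Fin (m+1), ‖x j.succ - y‖ ≤ C := by
      intro j
      have h1 : dist y (x j.succ) ∈ D := hFD y hyF j.succ (Fin.succ_ne_zero j)
      have h2 := (hD h1).2
      rw [← dist_eq_norm, dist_comm]
      exact h2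
    have hydet : c ≤ |Matrix.det (Matrix.of fun i j : Fin (m+1) => (x j.succ - y) i)| := by
      set yy : Fin (m+1+1) → Euc (m+1) := Function.update x 0 y with hyy
      have h0 : yy 0 = y := by rw [hyy]; exact Function.update_self _ _ _
      have hsucc : ∀ j : Fin (m+1), yy j.succ = x j.succ := fun j => by
        rw [hyy]; exact Function.update_of_ne (Fin.succ_ne_zero j) _ _
      have hmem : ∀ k, yy k ∈ closedBall (b k) 1 := by
        intro k
        rcases eq_or_ne k 0 with rfl | hk
        · rw [h0]; exact hFb hyF
        · rw [hyy, Function.update_of_ne hk]; exact hx k hk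
      have hMeq : (Matrix.of fun i j : Fin (m+1) => (yy j.succ - yy 0) i)
          = (Matrix.of fun i j : Fin (m+1) => (x j.succ - y) i) := by
        ext i j
        simp only [Matrix.of_apply]
        rw [hsucc j, h0]
      have h := (hdetH yy hmem).1
      rwa [hMeq] at h
    obtain ⟨j, hj⟩ := det_transversal hC (fun j => x j.succ - y) hwnorm he hc hydet
    exact Set.mem_iUnion.mpr ⟨j, ⟨hyT, hyF⟩, hj⟩
  have hDIcc : volume (D ∩ Icc 0 C) ≤ ENNReal.ofReal (C * C^((1:ℝ)/2) * δ^((1:ℝ)/2)) := by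
    have hIcc : Icc (0:ℝ) C = closedBall (C/2) (C/2) := by
      rw [Real.closedBall_eq_Icc]; norm_num
    have h1 := hDRho (C/2) (C/2) hδC2
    rw [← hIcc] at h1
    refine le_trans h1 (ENNReal.ofReal_le_ofReal ?_)
    have e2 : (1 - 1/2 : ℝ) = 1/2 := by norm_num
    rw [e2]
    have h3 : (C/2 : ℝ)^((1:ℝ)/2) ≤ C^((1:ℝ)/2) := by
      apply Real.rpow_le_rpow (by positivity) (by linarith) (by norm_num)
    calc C * δ^((1:ℝ)/2) * (C/2)^((1:ℝ)/2) ≤ C * δ^((1:ℝ)/2) * C^((1:ℝ)/2) := by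
          apply mul_le_mul_of_nonneg_left h3 (by positivity)
      _ = C * C^((1:ℝ)/2) * δ^((1:ℝ)/2) := by ring
  have hperj : ∀ j : Fin (m+1), volume (T ∩ F ∩ G j)
      ≤ ENNReal.ofReal (2*(C/c₁)) * ENNReal.ofReal (C * C^((1:ℝ)/2) * δ^((1:ℝ)/2))
        * (ENNReal.ofReal (δ^m) * volume (ball (0 : Euc m) 1)) := by
    intro j
    set S : Set (Euc (m+1)) := T ∩ F ∩ G j with hSdef
    have hSmeas : MeasurableSet S := (hTm.inter hFm).inter (hGm j)
    set Ψ : Euc (m+1) ≃ᵐ ℝ × (Fin m → ℝ) :=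
      B.measurableEquiv.trans (((MeasurableEquiv.toLp 2 (Fin (m+1) → ℝ)).symm).trans
        (MeasurableEquiv.piFinSuccAbove (fun _ : Fin (m+1) => ℝ) 0)) with hΨdef
    have hΨmp : MeasurePreserving Ψ volume volume :=
      ((volume_preserving_piFinSuccAbove (fun _ : Fin (m+1) => ℝ) 0).comp
        (EuclideanSpace.volume_preserving_symm_measurableEquiv_toLp (Fin (m+1)))).comp
        B.measurePreserving_measurableEquiv
    have hΨ1 : ∀ y : Euc (m+1), (Ψ y).1 = B.repr y 0 := fun _ => rfl
    have hΨ2 : ∀ (y : Euc (m+1)) (i : Fin m), (Ψ y).2 i = B.repr y i.succ := by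
      intro y i
      show B.repr y ((0 : Fin (m+1)).succAbove i) = _
      rw [Fin.zero_succAbove]
    set S' : Set (ℝ × (Fin m → ℝ)) := Ψ '' S with hS'def
    have hS'meas : MeasurableSet S' := Ψ.measurableSet_image.mpr hSmeas
    have hvol : volume S = volume S' := by
      rw [← hΨmp.measure_preimage hS'meas.nullMeasurableSet, hS'def,
        Set.preimage_image_eq S Ψ.injective]
    set Z : Set (Fin m → ℝ) := {z | Real.sqrt (∑ i, (z i - B.repr a i.succ)^2) ≤ δ} with hZdef
    have hZmeas : MeasurableSet Z := by
      have : IsClosed Z := isClosed_le (by fun_prop) continuous_const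
      exact this.measurableSet
    set Mb : ℝ≥0∞ := ENNReal.ofReal (2*(C/c₁)) * volume (D ∩ Icc 0 C) with hMbdef
    have hfiber : ∀ z : Fin m → ℝ,
        volume {t : ℝ | (t, z) ∈ S'} ≤ Z.indicator (fun _ => Mb) z := by
      intro z
      rcases em (z ∈ Z) with hz | hz
      · rw [Set.indicator_of_mem hz]
        set p : ℝ := B.repr (x j.succ) 0 with hpdef
        set s : ℝ := Real.sqrt (∑ i, (z i - B.repr (x j.succ) i.succ)^2) with hsdef
        have hsub : {t : ℝ | (t, z) ∈ S'}
            ⊆ {t : ℝ | Real.sqrt ((t - p)^2 + s^2) ∈ D ∧ c₁ ≤ |t - p|} := by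
          rintro t ⟨y, hyS, hyt⟩
          have ht1 : B.repr y 0 = t := by rw [← hΨ1 y, hyt]
          have ht2 : ∀ i, B.repr y i.succ = z i := fun i => by rw [← hΨ2 y i, hyt]
          obtain ⟨⟨hyT, hyF⟩, hyG⟩ := hyS
          constructor
          · have hdisteq : dist y (x j.succ) = Real.sqrt ((t - p)^2 + s^2) := by
              rw [dist_repr B y (x j.succ)]
              congr 1
              rw [hsdef, Real.sq_sqrt (by positivity)]
              congr 1
              · rw [ht1, hpdef]
              · apply Finset.sum_congr rfl
                intro i _
                rw [ht2 i]
            rw [← hdisteq]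
            exact hFD y hyF j.succ (Fin.succ_ne_zero j)
          · have hinn : ⟪e, x j.succ - y⟫ = p - t := by
              have h1 : ⟪e, x j.succ⟫ = p := by
                rw [hpdef, ← hB0, B.repr_apply_apply]
              have h2 : ⟪e, y⟫ = t := by
                rw [← ht1, ← hB0, B.repr_apply_apply]
              rw [inner_sub_right, h1, h2]
            have hyG' : c₁ ≤ |⟪e, x j.succ - y⟫| := hyG
            rwa [hinn, abs_sub_comm] at hyG'
        calc volume {t : ℝ | (t, z) ∈ S'}
            ≤ volume {t : ℝ | Real.sqrt ((t - p)^2 + s^2) ∈ D ∧ c₁ ≤ |t - p|} :=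
              measure_mono hsub
          _ ≤ Mb := oneD hC0 hD hc₁ p s
      · rw [Set.indicator_of_notMem hz]
        have hempty : {t : ℝ | (t, z) ∈ S'} = ∅ := by
          ext t
          simp only [Set.mem_setOf_eq, Set.mem_empty_iff_false, iff_false]
          rintro ⟨y, hyS, hyt⟩
          have ht2 : ∀ i, B.repr y i.succ = z i := fun i => by rw [← hΨ2 y i, hyt]
          apply hz
          have htl := tube_tail B hB0 a y hyS.1.1
          have : Real.sqrt (∑ i, (z i - B.repr a i.succ)^2) ≤ δ := by
            rw [show (∑ i, (z i - B.repr a i.succ)^2)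
              = ∑ i : Fin m, (B.repr y i.succ - B.repr a i.succ)^2 from
              Finset.sum_congr rfl fun i _ => by rw [ht2 i]]
            exact htl
          exact this
        rw [hempty, measure_empty]
    have hZvol : volume Z = ENNReal.ofReal (δ^m) * volume (ball (0 : Euc m) 1) := by
      set φ := (MeasurableEquiv.toLp 2 (Fin m → ℝ)).symm with hφ
      set za' : Euc m := φ.symm (fun i => B.repr a i.succ) with hza'
      have hZeq : Z = φ.symm ⁻¹' (closedBall za' δ) := by
        ext z
        simp only [hZdef, Set.mem_setOf_eq, Set.mem_preimage, Metric.mem_closedBall]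
        rw [EuclideanSpace.dist_eq]
        constructor
        · intro h
          refine le_trans (le_of_eq ?_) h
          congr 1
          apply Finset.sum_congr rfl
          intro i _
          rw [Real.dist_eq, sq_abs]
          rfl
        · intro h
          refine le_trans (le_of_eq ?_) h
          congr 1
          apply Finset.sum_congr rfl
          intro i _
          rw [Real.dist_eq, sq_abs]
          rfl
      rw [hZeq,
        ((EuclideanSpace.volume_preserving_symm_measurableEquiv_toLp (Fin m)).symm).measure_preimage
          measurableSet_closedBall.nullMeasurableSet,
        Measure.addHaar_closedBall _ _ hδ0.le, finrank_euclideanSpace_fin]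
    have hcalc : volume S' ≤ Mb * volume Z := by
      calc volume S' = (volume.prod volume) S' := by rw [← Measure.volume_eq_prod]
        _ = ∫⁻ z, volume ((fun t => (t, z)) ⁻¹' S') ∂volume :=
            Measure.prod_apply_symm hS'meas
        _ ≤ ∫⁻ z, Z.indicator (fun _ => Mb) z ∂volume := lintegral_mono hfiber
        _ = Mb * volume Z := lintegral_indicator_const hZmeas Mb
    calc volume (T ∩ F ∩ G j) = volume S' := hvol
      _ ≤ Mb * volume Z := hcalc
      _ ≤ ENNReal.ofReal (2*(C/c₁)) * ENNReal.ofReal (C * C^((1:ℝ)/2) * δ^((1:ℝ)/2))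
            * (ENNReal.ofReal (δ^m) * volume (ball (0 : Euc m) 1)) := by
          rw [hZvol, hMbdef]
          rw [show ENNReal.ofReal (2*(C/c₁)) * ENNReal.ofReal (C * C^((1:ℝ)/2) * δ^((1:ℝ)/2))
            * (ENNReal.ofReal (δ^m) * volume (ball (0 : Euc m) 1))
            = (ENNReal.ofReal (2*(C/c₁)) * ENNReal.ofReal (C * C^((1:ℝ)/2) * δ^((1:ℝ)/2)))
            * (ENNReal.ofReal (δ^m) * volume (ball (0 : Euc m) 1)) from rfl]
          gcongr
  -- assemble
  have hball : volume (ball (0 : Euc m) 1) = ENNReal.ofReal κ := by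
    rw [hκdef, ENNReal.ofReal_toReal measure_ball_lt_top.ne]
  have hsum : volume (Tube δ a v ∩ F) ≤ ∑ j : Fin (m+1), volume (T ∩ F ∩ G j) := by
    rw [hTube]
    exact le_trans (measure_mono hcover) ((measure_iUnion_le _).trans_eq (tsum_fintype _))
  have hδm0 : (0:ℝ) ≤ δ^m := by positivity
  have hδh0 : (0:ℝ) ≤ δ^((1:ℝ)/2) := Real.rpow_nonneg hδ0.le _
  calc volume (Tube δ a v ∩ F)
      ≤ ∑ j : Fin (m+1), volume (T ∩ F ∩ G j) := hsum
    _ ≤ ∑ _j : Fin (m+1), (ENNReal.ofReal (2*(C/c₁))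
          * ENNReal.ofReal (C * C^((1:ℝ)/2) * δ^((1:ℝ)/2))
          * (ENNReal.ofReal (δ^m) * volume (ball (0 : Euc m) 1))) :=
        Finset.sum_le_sum fun j _ => hperj j
    _ = ((m+1 : ℕ) : ℝ≥0∞) * (ENNReal.ofReal (2*(C/c₁))
          * ENNReal.ofReal (C * C^((1:ℝ)/2) * δ^((1:ℝ)/2))
          * (ENNReal.ofReal (δ^m) * ENNReal.ofReal κ)) := by
        rw [Finset.sum_const, Finset.card_univ, Fintype.card_fin, nsmul_eq_mul, hball]
    _ = ENNReal.ofReal (A₀ * (δ^((1:ℝ)/2) * δ^m)) := by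
        rw [← ENNReal.ofReal_natCast (m+1), ← ENNReal.ofReal_mul hδm0,
            ← ENNReal.ofReal_mul (by positivity : (0:ℝ) ≤ 2*(C/c₁)),
            ← ENNReal.ofReal_mul (by positivity : (0:ℝ) ≤ 2*(C/c₁) * (C * C^((1:ℝ)/2) * δ^((1:ℝ)/2))),
            ← ENNReal.ofReal_mul (by positivity : (0:ℝ) ≤ ((m+1:ℕ):ℝ))]
        congr 1
        rw [hA₀def]
        push_cast
        ring
    _ ≤ ENNReal.ofReal (δ ^ (((m+1:ℕ) : ℝ) - 1 / 2 - 1 * ε)) := by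
        apply ENNReal.ofReal_le_ofReal
        have hpow : δ^((1:ℝ)/2) * δ^m = δ ^ ((1:ℝ)/2 + (m:ℝ)) := by
          rw [Real.rpow_add hδ0, Real.rpow_natCast]
        rw [hpow]
        have hRHS : δ ^ (((m+1:ℕ) : ℝ) - 1 / 2 - 1 * ε)
            = δ ^ (-ε) * δ ^ ((1:ℝ)/2 + (m:ℝ)) := by
          rw [← Real.rpow_add hδ0]
          congr 1
          push_cast
          ring
        rw [hRHS]
        apply mul_le_mul_of_nonneg_right _ (Real.rpow_nonneg hδ0.le _)
        have h1 : A₀ ≤ A₁ := le_max_left _ _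
        have h2 : A₁ ≤ δ ^ (-ε) := by
          have h3 := Real.rpow_le_rpow_of_nonpos hδ0 hδA (by linarith : -ε ≤ 0)
          calc A₁ = (A₁ ^ (-1/ε : ℝ)) ^ (-ε : ℝ) := by
                rw [← Real.rpow_mul hA₁0.le]
                rw [show (-1/ε) * (-ε) = 1 by field_simp]
                rw [Real.rpow_one]
            _ ≤ δ ^ (-ε) := h3
        linarith

end
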